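/- For every integer m ≥ 1, the joint density J_m is continuous on the domain {(t₀, …, t_m) : t_j > 0 for all j and Σ_{j=0}^{m} t_j < Δ} (on this domain none of the discontinuity hyperplanes Σ_{j=i+1}^{m} t_j = Δ, i = −1, …, m−1, is met). -/

import Mathlib

open Real Set Filter MeasureTheory

/-- Conditional ISI density `F t s` given time-to-live `s` of the feedback impulse. -/
noncomputable def F (lam τ t s : ℝ) : ℝ :=
  if 0 < t ∧ t < s then lam ^ 2 * t * Real.exp (-lam * t)
  else if s ≤ t ∧ t ≤ s + τ then
    (1 + lam * s) * Real.exp (-lam * s) * (lam ^ 2 * (t - s) * Real.exp (-lam * (t - s)))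
  else 0

/-- Regular part of the stationary time-to-live density. -/
noncomputable def g (lam A B s : ℝ) : ℝ := A + B * Real.exp (2 * lam * s)

/-- Weight of the singular (Dirac) part of the stationary time-to-live distribution. -/
noncomputable def aC (lam Δ : ℝ) : ℝ :=
  4 * Real.exp (2 * lam * Δ) / ((3 + 2 * lam * Δ) * Real.exp (2 * lam * Δ) + 1)

/-- `T t p q = Σ_{j=p}^{q-1} t_j` (empty sums are `0`). -/
def T {n : ℕ} (t : Fin n → ℝ) (p q : ℕ) : ℝ :=
  ∑ j : Fin n, if p ≤ (j : ℕ) ∧ (j : ℕ) < q then t j else 0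

/-- `Ilow lam Δ τ A B i t` is the term `I_i`, `0 ≤ i ≤ m-1`, of the joint ISI density. -/
noncomputable def Ilow (lam Δ τ A B : ℝ) {m : ℕ} (i : ℕ) (t : Fin (m + 1) → ℝ) : ℝ :=
  (∏ k : Fin (m + 1), if i + 1 ≤ (k : ℕ) then F lam τ (t k) (Δ - T t (i + 1) (k : ℕ)) else 1) *
    ∫ s in T t 0 i..T t 0 (i + 1),
      g lam A B s *
        ∏ k : Fin (m + 1), if (k : ℕ) ≤ i then F lam τ (t k) (s - T t 0 (k : ℕ)) else 1

/-- `Itop lam Δ τ A B t` is the term `I_m` of the joint ISI density. -/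
noncomputable def Itop (lam Δ τ A B : ℝ) {m : ℕ} (t : Fin (m + 1) → ℝ) : ℝ :=
  (∫ s in T t 0 m..Δ, g lam A B s * ∏ k : Fin (m + 1), F lam τ (t k) (s - T t 0 (k : ℕ)))
    + aC lam Δ * ∏ k : Fin (m + 1), F lam τ (t k) (Δ - T t 0 (k : ℕ))

/-- `J lam Δ τ A B t = Σ_{i=0}^{m} I_i(t)`, the joint density of `m+1` consecutive ISIs. -/
noncomputable def J (lam Δ τ A B : ℝ) {m : ℕ} (t : Fin (m + 1) → ℝ) : ℝ :=
  (∑ i ∈ Finset.range m, Ilow lam Δ τ A B i t) + Itop lam Δ τ A B t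

/-! ### Auxiliary definitions and lemmas -/


noncomputable def F1 (lam v : ℝ) : ℝ := lam ^ 2 * v * Real.exp (-lam * v)

noncomputable def F2 (lam v s : ℝ) : ℝ :=
  (1 + lam * s) * Real.exp (-lam * s) * (lam ^ 2 * (v - s) * Real.exp (-lam * (v - s)))

lemma contF1 {X : Type*} [TopologicalSpace X] (lam : ℝ) {v : X → ℝ} (hv : Continuous v) :
    Continuous fun x => F1 lam (v x) :=
  (continuous_const.mul hv).mul (Real.continuous_exp.comp (continuous_const.mul hv))

lemma contF2 {X : Type*} [TopologicalSpace X] (lam : ℝ) {v w : X → ℝ} (hv : Continuous v)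
    (hw : Continuous w) : Continuous fun x => F2 lam (v x) (w x) :=
  ((continuous_const.add (continuous_const.mul hw)).mul
      (Real.continuous_exp.comp (continuous_const.mul hw))).mul
    ((continuous_const.mul (hv.sub hw)).mul
      (Real.continuous_exp.comp (continuous_const.mul (hv.sub hw))))

lemma contg {X : Type*} [TopologicalSpace X] (lam A B : ℝ) {v : X → ℝ} (hv : Continuous v) :
    Continuous fun x => g lam A B (v x) :=
  continuous_const.add
    (continuous_const.mul (Real.continuous_exp.comp (continuous_const.mul hv)))

lemma F_eq_F1 {lam τ t s : ℝ} (h1 : 0 < t) (h2 : t < s) : F lam τ t s = F1 lam t :=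
  if_pos ⟨h1, h2⟩

lemma F_eq_F2 {lam τ t s : ℝ} (h1 : s ≤ t) (h2 : t ≤ s + τ) : F lam τ t s = F2 lam t s := by
  unfold F F2
  rw [if_neg (fun h => absurd h.2 (not_lt.2 h1)), if_pos ⟨h1, h2⟩]

lemma continuous_T {n : ℕ} (p q : ℕ) : Continuous fun t : Fin n → ℝ => T t p q := by
  unfold T
  refine continuous_finset_sum _ fun j _ => ?_
  by_cases h : p ≤ (j : ℕ) ∧ (j : ℕ) < q
  · simp only [if_pos h]; exact continuous_apply j
  · simp only [if_neg h]; exact continuous_const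

lemma T_succ {n : ℕ} (t : Fin n → ℝ) {p q : ℕ} (hq : q < n) (hpq : p ≤ q) :
    T t p (q + 1) = T t p q + t ⟨q, hq⟩ := by
  have h : ∀ j : Fin n, (if p ≤ (j : ℕ) ∧ (j : ℕ) < q + 1 then t j else 0)
      = (if p ≤ (j : ℕ) ∧ (j : ℕ) < q then t j else 0)
        + (if j = ⟨q, hq⟩ then t j else 0) := by
    intro j
    by_cases hj : (j : ℕ) = q
    · have hje : j = ⟨q, hq⟩ := Fin.ext hj
      subst hje
      simp [hpq, hj]
    · have h2 : ¬j = ⟨q, hq⟩ := fun h => hj (by rw [h])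
      have h3 : ((j : ℕ) < q + 1) ↔ ((j : ℕ) < q) := by omega
      simp [h2, h3]
  unfold T
  rw [Finset.sum_congr rfl fun j _ => h j, Finset.sum_add_distrib, Finset.sum_ite_eq']
  simp

lemma T_le_T {n : ℕ} (t : Fin n → ℝ) (ht : ∀ j, 0 ≤ t j) {p q p' q' : ℕ} (hp : p' ≤ p)
    (hq : q ≤ q') : T t p q ≤ T t p' q' := by
  refine Finset.sum_le_sum fun j _ => ?_
  split_ifs with h1 h2 h2
  · exact le_rfl
  · exact absurd ⟨hp.trans h1.1, h1.2.trans_le hq⟩ h2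
  · exact ht j
  · exact le_rfl

lemma T_single {n : ℕ} (t : Fin n → ℝ) (ht : ∀ j, 0 ≤ t j) (k : Fin n) : t k ≤ T t 0 n := by
  unfold T
  rw [Finset.sum_congr rfl fun j _ => if_pos ⟨Nat.zero_le _, j.isLt⟩]
  exact Finset.single_le_sum (fun j _ => ht j) (Finset.mem_univ k)

lemma continuous_paramInt {X : Type*} [TopologicalSpace X] [FirstCountableTopology X]
    [LocallyCompactSpace X] (f : X → ℝ → ℝ)
    (hf : Continuous (Function.uncurry f)) {a b : X → ℝ} (ha : Continuous a)
    (hb : Continuous b) : Continuous fun x => ∫ s in a x..b x, f x s := by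
  have hInt : ∀ x u v, IntervalIntegrable (f x) MeasureTheory.volume u v := fun x u v =>
    (hf.uncurry_left x).intervalIntegrable u v
  have h : ∀ x, ∫ s in a x..b x, f x s
      = (∫ s in (0:ℝ)..b x, f x s) - ∫ s in (0:ℝ)..a x, f x s := fun x =>
    (intervalIntegral.integral_interval_sub_left (hInt x 0 (b x)) (hInt x 0 (a x))).symm
  rw [funext h]
  exact (intervalIntegral.continuous_parametric_intervalIntegral_of_continuous hf hb).sub
    (intervalIntegral.continuous_parametric_intervalIntegral_of_continuous hf ha)

/-- for every `m ≥ 1`, the joint density `J_m` is continuous on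
`{t_j > 0 ∀ j, Σ_{j=0}^{m} t_j < Δ}`. -/
theorem stmt14 (lam Δ τ A B : ℝ) (hlam : 0 < lam) (hΔ : 0 < Δ) (hΔτ : Δ < τ)
    (m : ℕ) (hm : 1 ≤ m) :
    ContinuousOn (J lam Δ τ A B (m := m))
      {t : Fin (m + 1) → ℝ | (∀ j, 0 < t j) ∧ T t 0 (m + 1) < Δ} := by
  set U : Set (Fin (m + 1) → ℝ) := {t | (∀ j, 0 < t j) ∧ T t 0 (m + 1) < Δ} with hU
  -- basic facts valid on U
  have hpos : ∀ {t : Fin (m + 1) → ℝ}, t ∈ U → ∀ j, 0 ≤ t j := fun ht j => (ht.1 j).le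
  have hSsucc : ∀ {t : Fin (m + 1) → ℝ}, ∀ p : ℕ, ∀ k : Fin (m + 1), p ≤ (k : ℕ) →
      T t p ((k : ℕ) + 1) = T t p (k : ℕ) + t k := by
    intro t p k hk
    have := T_succ t k.isLt hk
    simpa [Fin.eta] using this
  unfold J
  apply ContinuousOn.add
  · -- sum of Ilow terms
    apply continuousOn_finset_sum
    intro i hi
    have him : i < m := Finset.mem_range.mp hi
    -- continuous model for Ilow i
    set Φ : (Fin (m + 1) → ℝ) → ℝ := fun t =>
      (∏ k : Fin (m + 1), if i + 1 ≤ (k : ℕ) then F1 lam (t k) else 1) *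
        ∫ s in T t 0 i..T t 0 (i + 1),
          g lam A B s * ∏ k : Fin (m + 1),
            if (k : ℕ) ≤ i then
              (if (k : ℕ) = i then F2 lam (t k) (s - T t 0 i) else F1 lam (t k)) else 1
      with hΦ
    have hΦcont : Continuous Φ := by
      apply Continuous.mul
      · refine continuous_finset_prod _ fun k _ => ?_
        by_cases h : i + 1 ≤ (k : ℕ)
        · simp only [if_pos h]; exact contF1 lam (continuous_apply k)
        · simp only [if_neg h]; exact continuous_const
      · apply continuous_paramInt _ _ (continuous_T 0 i) (continuous_T 0 (i + 1))
        apply Continuous.mul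
        · exact contg lam A B continuous_snd
        · refine continuous_finset_prod _ fun k _ => ?_
          by_cases h1 : (k : ℕ) ≤ i
          · by_cases h2 : (k : ℕ) = i
            · simp only [if_pos h1, if_pos h2]
              exact contF2 lam ((continuous_apply k).comp continuous_fst)
                (continuous_snd.sub ((continuous_T 0 i).comp continuous_fst))
            · simp only [if_pos h1, if_neg h2]
              exact contF1 lam ((continuous_apply k).comp continuous_fst)
          · simp only [if_neg h1]; exact continuous_const
    refine hΦcont.continuousOn.congr ?_
    intro t ht
    have ht1 := ht.1
    have ht2 := ht.2
    unfold Ilow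
    rw [hΦ]
    congr 1
    · -- prefactor
      refine Finset.prod_congr rfl fun k _ => ?_
      by_cases h : i + 1 ≤ (k : ℕ)
      · rw [if_pos h, if_pos h]
        refine F_eq_F1 (ht1 k) ?_
        have e1 : T t (i + 1) ((k : ℕ) + 1) = T t (i + 1) (k : ℕ) + t k := hSsucc (i + 1) k h
        have e2 : T t (i + 1) ((k : ℕ) + 1) ≤ T t 0 (m + 1) :=
          T_le_T t (hpos ht) (Nat.zero_le _) (by omega)
        linarith
      · rw [if_neg h, if_neg h]
    · -- integral
      apply intervalIntegral.integral_congr_ae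
      refine Eventually.of_forall fun s hs => ?_
      have him1 : i < m + 1 := by omega
      have hio : T t 0 i < T t 0 (i + 1) := by
        have := T_succ t him1 (Nat.zero_le i)
        have := ht1 ⟨i, him1⟩
        linarith [T_succ t him1 (Nat.zero_le i), ht1 ⟨i, him1⟩]
      rw [Set.uIoc_of_le hio.le] at hs
      congr 1
      refine Finset.prod_congr rfl fun k _ => ?_
      by_cases h1 : (k : ℕ) ≤ i
      · rw [if_pos h1, if_pos h1]
        by_cases h2 : (k : ℕ) = i
        · rw [if_pos h2, h2]
          have hTk : T t 0 (i + 1) = T t 0 i + t k := by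
            have : k = ⟨i, him1⟩ := Fin.ext h2
            rw [this] at *
            exact T_succ t him1 (Nat.zero_le i)
          refine F_eq_F2 ?_ ?_
          · linarith [hs.2]
          · have h3 : t k ≤ T t 0 (m + 1) := T_single t (hpos ht) k
            linarith [hs.1]
        · rw [if_neg h2]
          have hki : (k : ℕ) + 1 ≤ i := by omega
          refine F_eq_F1 (ht1 k) ?_
          have h3 : T t 0 ((k : ℕ) + 1) ≤ T t 0 i := T_le_T t (hpos ht) le_rfl hki
          have h4 : T t 0 ((k : ℕ) + 1) = T t 0 (k : ℕ) + t k := hSsucc 0 k (Nat.zero_le _)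
          linarith [hs.1]
      · rw [if_neg h1, if_neg h1]
  · -- Itop
    set Φ : (Fin (m + 1) → ℝ) → ℝ := fun t =>
      ((∫ s in T t 0 m..T t 0 (m + 1),
          g lam A B s * ∏ k : Fin (m + 1),
            (if (k : ℕ) = m then F2 lam (t k) (s - T t 0 m) else F1 lam (t k)))
        + ∫ s in T t 0 (m + 1)..Δ, g lam A B s * ∏ k : Fin (m + 1), F1 lam (t k))
        + aC lam Δ * ∏ k : Fin (m + 1), F1 lam (t k) with hΦ
    have hcontprod : Continuous fun t : Fin (m + 1) → ℝ => ∏ k : Fin (m + 1), F1 lam (t k) :=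
      continuous_finset_prod _ fun k _ => contF1 lam (continuous_apply k)
    have hΦcont : Continuous Φ := by
      apply Continuous.add
      · apply Continuous.add
        · apply continuous_paramInt _ _ (continuous_T 0 m) (continuous_T 0 (m + 1))
          apply Continuous.mul (contg lam A B continuous_snd)
          refine continuous_finset_prod _ fun k _ => ?_
          by_cases h2 : (k : ℕ) = m
          · simp only [if_pos h2]
            exact contF2 lam ((continuous_apply k).comp continuous_fst)
              (continuous_snd.sub ((continuous_T 0 m).comp continuous_fst))
          · simp only [if_neg h2]
            exact contF1 lam ((continuous_apply k).comp continuous_fst)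
        · apply continuous_paramInt _ _ (continuous_T 0 (m + 1)) continuous_const
          exact Continuous.mul (contg lam A B continuous_snd)
            (hcontprod.comp continuous_fst)
      · exact continuous_const.mul hcontprod
    refine hΦcont.continuousOn.congr ?_
    intro t ht
    have ht1 := ht.1
    have ht2 := ht.2
    have hmm : m < m + 1 := Nat.lt_succ_self m
    have hSm : T t 0 (m + 1) = T t 0 m + t ⟨m, hmm⟩ := T_succ t hmm (Nat.zero_le m)
    have h01 : T t 0 m < T t 0 (m + 1) := by
      have := ht1 ⟨m, hmm⟩; linarith
    have h12 : T t 0 (m + 1) < Δ := ht2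
    -- the two model integrands
    set f : ℝ → ℝ := fun s =>
      g lam A B s * ∏ k : Fin (m + 1), F lam τ (t k) (s - T t 0 (k : ℕ)) with hf
    set f1 : ℝ → ℝ := fun s =>
      g lam A B s * ∏ k : Fin (m + 1),
        (if (k : ℕ) = m then F2 lam (t k) (s - T t 0 m) else F1 lam (t k)) with hf1
    set f2 : ℝ → ℝ := fun s =>
      g lam A B s * ∏ k : Fin (m + 1), F1 lam (t k) with hf2
    have heq1 : ∀ s ∈ Set.uIoc (T t 0 m) (T t 0 (m + 1)), f s = f1 s := by
      intro s hs
      rw [Set.uIoc_of_le h01.le] at hs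
      rw [hf, hf1]
      dsimp only
      congr 1
      refine Finset.prod_congr rfl fun k _ => ?_
      by_cases h2 : (k : ℕ) = m
      · rw [if_pos h2, h2]
        have hk : k = ⟨m, hmm⟩ := Fin.ext h2
        refine F_eq_F2 ?_ ?_
        · rw [hk]; linarith [hs.2]
        · have h3 : t k ≤ T t 0 (m + 1) := T_single t (hpos ht) k
          linarith [hs.1]
      · rw [if_neg h2]
        have hkm : (k : ℕ) + 1 ≤ m := by omega
        refine F_eq_F1 (ht1 k) ?_
        have h3 : T t 0 ((k : ℕ) + 1) ≤ T t 0 m := T_le_T t (hpos ht) le_rfl hkm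
        have h4 : T t 0 ((k : ℕ) + 1) = T t 0 (k : ℕ) + t k := hSsucc 0 k (Nat.zero_le _)
        linarith [hs.1]
    have heq2 : ∀ s ∈ Set.uIoc (T t 0 (m + 1)) Δ, f s = f2 s := by
      intro s hs
      rw [Set.uIoc_of_le h12.le] at hs
      rw [hf, hf2]
      dsimp only
      congr 1
      refine Finset.prod_congr rfl fun k _ => ?_
      refine F_eq_F1 (ht1 k) ?_
      have h3 : T t 0 ((k : ℕ) + 1) ≤ T t 0 (m + 1) :=
        T_le_T t (hpos ht) le_rfl (by omega)
      have h4 : T t 0 ((k : ℕ) + 1) = T t 0 (k : ℕ) + t k := hSsucc 0 k (Nat.zero_le _)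
      linarith [hs.1]
    have hf1cont : Continuous f1 := by
      apply Continuous.mul (contg lam A B continuous_id)
      refine continuous_finset_prod _ fun k _ => ?_
      by_cases h2 : (k : ℕ) = m
      · simp only [if_pos h2]
        exact contF2 lam continuous_const (continuous_id.sub continuous_const)
      · simp only [if_neg h2]; exact continuous_const
    have hf2cont : Continuous f2 :=
      Continuous.mul (contg lam A B continuous_id) continuous_const
    have hae1 : f1 =ᵐ[MeasureTheory.volume.restrict (Set.uIoc (T t 0 m) (T t 0 (m + 1)))] f :=
      Filter.eventuallyEq_of_mem (self_mem_ae_restrict measurableSet_uIoc)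
        fun s hs => (heq1 s hs).symm
    have hi1 : IntervalIntegrable f MeasureTheory.volume (T t 0 m) (T t 0 (m + 1)) :=
      (hf1cont.intervalIntegrable _ _).congr_ae hae1
    have hi2 : IntervalIntegrable f MeasureTheory.volume (T t 0 (m + 1)) Δ := by
      refine (hf2cont.intervalIntegrable _ _).congr_ae ?_
      exact Filter.eventuallyEq_of_mem (self_mem_ae_restrict measurableSet_uIoc)
        fun s hs => (heq2 s hs).symm
    unfold Itop
    rw [hΦ]
    dsimp only
    congr 1
    · -- integral part
      have hsplit : ∫ s in T t 0 m..Δ, f s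
          = (∫ s in T t 0 m..T t 0 (m + 1), f s) + ∫ s in T t 0 (m + 1)..Δ, f s :=
        (intervalIntegral.integral_add_adjacent_intervals hi1 hi2).symm
      rw [show (∫ s in T t 0 m..Δ,
            g lam A B s * ∏ k : Fin (m + 1), F lam τ (t k) (s - T t 0 (k : ℕ)))
          = ∫ s in T t 0 m..Δ, f s from rfl, hsplit]
      congr 1
      · exact intervalIntegral.integral_congr_ae (Eventually.of_forall heq1)
      · exact intervalIntegral.integral_congr_ae (Eventually.of_forall heq2)
    · -- aC part
      congr 1
      refine Finset.prod_congr rfl fun k _ => ?_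
      refine F_eq_F1 (ht1 k) ?_
      have h3 : T t 0 ((k : ℕ) + 1) ≤ T t 0 (m + 1) :=
        T_le_T t (hpos ht) le_rfl (by omega)
      have h4 : T t 0 ((k : ℕ) + 1) = T t 0 (k : ℕ) + t k := hSsucc 0 k (Nat.zero_le _)
      linarith
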